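/- Under hypothesis (S) and (B), for all integers j ≥ 1, a ≥ j and α ≥ 0 there exists C > 0 such that for all x' ∈ U', all ξ' ∈ ℝ^{n−1} and all (t, τ) ∈ ℝ²: |ω^{(j)}(t/⟨ξ'⟩)| · ⟨ξ'⟩^{α−a} · |(∂_{x_n}^{a−j} ∂_{ξ_n}^{α} φ)(x', t/⟨ξ'⟩, ξ', τ⟨ξ'⟩)| ≤ C ⟨t⟩^{1−a} ⟨τ⟩^{1−α}. (Estimate on the summands S_j, j ≥ 1, in part (P1) of the proof of Theorem 1.2; it uses that on the support of ω^{(j)}(t/⟨ξ'⟩) one has ⟨t⟩ ≤ 2⟨ξ'⟩ and ⟨ξ'⟩ ≤ 2⟨t⟩.) -/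

import Mathlib

noncomputable section

open Real MeasureTheory

/-- Japanese bracket of a real number: `⟨t⟩ = √(1+t²)`. -/
def jb (t : ℝ) : ℝ := Real.sqrt (1 + t ^ 2)

/-- Japanese bracket of a vector in `ℝᵏ` (Euclidean norm). -/
def jbV {k : ℕ} (v : Fin k → ℝ) : ℝ := Real.sqrt (1 + ∑ i, v i ^ 2)

/-- Japanese bracket of the full covariable `(ξ', ξₙ) ∈ ℝᵏ⁺¹`. -/
def jbP {k : ℕ} (v : Fin k → ℝ) (t : ℝ) : ℝ := Real.sqrt (1 + (∑ i, v i ^ 2) + t ^ 2)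

/-- Euclidean norm of a vector in `ℝᵏ`. -/
def enormV {k : ℕ} (v : Fin k → ℝ) : ℝ := Real.sqrt (∑ i, v i ^ 2)

/-- Euclidean norm of the full covariable `(ξ', ξₙ)`. -/
def enormP {k : ℕ} (v : Fin k → ℝ) (t : ℝ) : ℝ := Real.sqrt ((∑ i, v i ^ 2) + t ^ 2)

/-- Functions of `(x', xₙ, ξ', ξₙ)` with values in `E`. -/
abbrev Fn (k : ℕ) (E : Type*) := (Fin k → ℝ) → ℝ → (Fin k → ℝ) → ℝ → E

/-- The uncurried version of `f : Fn k E`. -/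
def Fn.unc {k : ℕ} {E : Type*} (f : Fn k E) :
    ((Fin k → ℝ) × ℝ × (Fin k → ℝ) × ℝ) → E :=
  fun p => f p.1 p.2.1 p.2.2.1 p.2.2.2

section Derivs

variable {k : ℕ} {E : Type*} [NormedAddCommGroup E] [NormedSpace ℝ E]

/-- Partial derivative in `xₙ`. -/
def Dxn (f : Fn k E) : Fn k E := fun x' xn ξ' ξn => deriv (fun t => f x' t ξ' ξn) xn

/-- Partial derivative in `ξₙ`. -/
def Dxin (f : Fn k E) : Fn k E := fun x' xn ξ' ξn => deriv (fun t => f x' xn ξ' t) ξn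

/-- Partial derivative in the `i`-th coordinate of `x'`. -/
def Dxp (i : Fin k) (f : Fn k E) : Fn k E :=
  fun x' xn ξ' ξn => deriv (fun t => f (Function.update x' i t) xn ξ' ξn) (x' i)

/-- Partial derivative in the `i`-th coordinate of `ξ'`. -/
def Dxip (i : Fin k) (f : Fn k E) : Fn k E :=
  fun x' xn ξ' ξn => deriv (fun t => f x' xn (Function.update ξ' i t) ξn) (ξ' i)

/-- Multi-index partial derivative `∂ₓ'^β`. -/
def DxpM (β : Fin k → ℕ) (f : Fn k E) : Fn k E :=
  (List.finRange k).foldr (fun i g => (Dxp i)^[β i] g) f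

/-- Multi-index partial derivative `∂_ξ'^α`. -/
def DxipM (α : Fin k → ℕ) (f : Fn k E) : Fn k E :=
  (List.finRange k).foldr (fun i g => (Dxip i)^[α i] g) f

/-- Partial derivative in the first of two real variables. -/
def D1 (F : ℝ → ℝ → E) : ℝ → ℝ → E := fun s t => deriv (fun u => F u t) s

/-- Partial derivative in the second of two real variables. -/
def D2 (F : ℝ → ℝ → E) : ℝ → ℝ → E := fun s t => deriv (fun u => F s u) t

end Derivs

/-- The cut-off function `ω`: smooth, even, non-increasing on `[0,∞)`,
`≡ 1` on `[-1/2,1/2]`, `≡ 0` outside `(-1,1)`. -/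
def CutOff (ω : ℝ → ℝ) : Prop :=
  ContDiff ℝ (⊤ : ℕ∞) ω ∧ (∀ t, ω (-t) = ω t) ∧ AntitoneOn ω (Set.Ici 0) ∧
    (∀ t : ℝ, |t| ≤ 1 / 2 → ω t = 1) ∧ (∀ t : ℝ, 1 ≤ |t| → ω t = 0)

/-- `φ := ψ − ψ_∂`, where `ψ_∂(x',ξ') = ψ(x',0,ξ',0)`. -/
def phiOf {k : ℕ} (ψ : Fn k ℝ) : Fn k ℝ :=
  fun x' xn ξ' ξn => ψ x' xn ξ' ξn - ψ x' 0 ξ' 0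

/-- Hypothesis (S): symbol estimates of order `1` for `ψ`, for `x' ∈ Ω'`, `|xₙ| ≤ 2`. -/
def HypS {k : ℕ} (Ω' : Set (Fin k → ℝ)) (ψ : Fn k ℝ) : Prop :=
  ∀ (a b : ℕ) (α β : Fin k → ℕ), ∃ C > 0, ∀ x' ∈ Ω', ∀ xn : ℝ, |xn| ≤ 2 →
    ∀ (ξ' : Fin k → ℝ) (ξn : ℝ),
      |DxpM β ((Dxn)^[b] (DxipM α ((Dxin)^[a] ψ))) x' xn ξ' ξn| ≤
        C * jbP ξ' ξn ^ ((1 : ℝ) - ((a : ℝ) + ∑ i, (α i : ℝ)))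

/-- Hypothesis (B): `∂_{ξₙ}ψ(x',0,ξ',ξₙ) = 0` for `x' ∈ Ω'`. -/
def HypB {k : ℕ} (Ω' : Set (Fin k → ℝ)) (ψ : Fn k ℝ) : Prop :=
  ∀ x' ∈ Ω', ∀ (ξ' : Fin k → ℝ) (ξn : ℝ), Dxin ψ x' 0 ξ' ξn = 0

/-- The rescaled phase function `*Φ`. -/
def PhiS {k : ℕ} (ω : ℝ → ℝ) (K : ℝ) (ψ : Fn k ℝ) (x' ξ' : Fin k → ℝ) (t τ : ℝ) : ℝ :=
  ω (t / jbV ξ') * phiOf ψ x' (t / jbV ξ') ξ' (τ * jbV ξ')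
    + (1 - ω (t / jbV ξ')) * K * t * τ

/-! ### Auxiliary lemmas -/

lemma jb_nonneg (t : ℝ) : 0 ≤ jb t := Real.sqrt_nonneg _

lemma jb_one_le (t : ℝ) : 1 ≤ jb t := by
  calc (1:ℝ) = Real.sqrt 1 := by simp
    _ ≤ jb t := Real.sqrt_le_sqrt (by nlinarith [sq_nonneg t])

lemma jb_pos (t : ℝ) : 0 < jb t := lt_of_lt_of_le one_pos (jb_one_le t)

lemma jbV_one_le {k : ℕ} (v : Fin k → ℝ) : 1 ≤ jbV v := by
  calc (1:ℝ) = Real.sqrt 1 := by simp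
    _ ≤ jbV v := Real.sqrt_le_sqrt
      (by have : 0 ≤ ∑ i, v i ^ 2 := Finset.sum_nonneg fun i _ => sq_nonneg _; linarith)

lemma jbV_pos {k : ℕ} (v : Fin k → ℝ) : 0 < jbV v :=
  lt_of_lt_of_le one_pos (jbV_one_le v)

lemma jbP_nonneg {k : ℕ} (v : Fin k → ℝ) (t : ℝ) : 0 ≤ jbP v t := Real.sqrt_nonneg _

lemma jbP_zero_le {k : ℕ} (v : Fin k → ℝ) (t : ℝ) : jbP v 0 ≤ jbP v t := by
  unfold jbP
  exact Real.sqrt_le_sqrt (by nlinarith [sq_nonneg t])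

/-- `⟨(ξ', τ⟨ξ'⟩)⟩ = ⟨ξ'⟩·⟨τ⟩`. -/
lemma jbP_scale {k : ℕ} (v : Fin k → ℝ) (τ : ℝ) : jbP v (τ * jbV v) = jbV v * jb τ := by
  have h0 : (0:ℝ) ≤ 1 + ∑ i, v i ^ 2 := by positivity
  unfold jbP jbV jb
  rw [show 1 + (∑ i, v i ^ 2) + (τ * Real.sqrt (1 + ∑ i, v i ^ 2)) ^ 2
      = (1 + ∑ i, v i ^ 2) * (1 + τ ^ 2) by
    rw [mul_pow, Real.sq_sqrt h0]; ring]
  rw [Real.sqrt_mul h0]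

lemma DxpM_zero {k : ℕ} {E : Type*} [NormedAddCommGroup E] [NormedSpace ℝ E]
    (f : Fn k E) : DxpM (fun _ => 0) f = f := by
  unfold DxpM
  generalize List.finRange k = l
  induction l with
  | nil => rfl
  | cons i l ih => simp [List.foldr_cons, ih]

lemma DxipM_zero {k : ℕ} {E : Type*} [NormedAddCommGroup E] [NormedSpace ℝ E]
    (f : Fn k E) : DxipM (fun _ => 0) f = f := by
  unfold DxipM
  generalize List.finRange k = l
  induction l with
  | nil => rfl
  | cons i l ih => simp [List.foldr_cons, ih]

lemma Dxin_phiOf {k : ℕ} (ψ : Fn k ℝ) : Dxin (phiOf ψ) = Dxin ψ := by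
  funext x' xn ξ' ξn
  simp only [Dxin, phiOf]
  exact deriv_sub_const _

lemma Dxn_phiOf {k : ℕ} (ψ : Fn k ℝ) : Dxn (phiOf ψ) = Dxn ψ := by
  funext x' xn ξ' ξn
  simp only [Dxn, phiOf]
  exact deriv_sub_const _

lemma iter_phiOf {k : ℕ} (ψ : Fn k ℝ) (b α : ℕ) (h : ¬(b = 0 ∧ α = 0)) :
    (Dxn)^[b] ((Dxin)^[α] (phiOf ψ)) = (Dxn)^[b] ((Dxin)^[α] ψ) := by
  rcases α with _ | m
  · rcases b with _ | m
    · exact absurd ⟨rfl, rfl⟩ h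
    · simp only [Function.iterate_zero, id_eq, Function.iterate_succ_apply, Dxn_phiOf]
  · simp only [Function.iterate_succ_apply, Dxin_phiOf]

lemma iteratedDeriv_zero_fun (m : ℕ) :
    iteratedDeriv m (fun _ : ℝ => (0:ℝ)) = fun _ => 0 := by
  induction m with
  | zero => simp [iteratedDeriv_zero]
  | succ m ih => rw [iteratedDeriv_succ', show deriv (fun _ : ℝ => (0:ℝ)) = fun _ => 0 by
      funext x; simp]; exact ih

/-- Estimate on the summands `S_j`, `j ≥ 1`, in part (P1) of the proof of Theorem 1.2:
`|ω^{(j)}(t/⟨ξ'⟩)| ⟨ξ'⟩^{α-a} |(∂_{xₙ}^{a-j} ∂_{ξₙ}^α φ)(x', t/⟨ξ'⟩, ξ', τ⟨ξ'⟩)|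
≤ C ⟨t⟩^{1-a} ⟨τ⟩^{1-α}` uniformly for `x' ∈ U'`, `ξ' ∈ ℝ^{n-1}`. -/
theorem statement17 {n : ℕ} (hn : 2 ≤ n)
    (Ω' : Set (Fin (n - 1) → ℝ)) (hΩ' : IsOpen Ω')
    (U' : Set (Fin (n - 1) → ℝ)) (hU' : IsCompact U') (hUΩ : U' ⊆ Ω')
    (ψ : Fn (n - 1) ℝ) (hψ : ContDiff ℝ (⊤ : ℕ∞) (Fn.unc ψ))
    (hS : HypS Ω' ψ) (hB : HypB (Set.univ : Set (Fin (n - 1) → ℝ)) ψ)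
    (ω : ℝ → ℝ) (hω : CutOff ω) :
    ∀ j a α : ℕ, 1 ≤ j → j ≤ a → ∃ C > 0,
      ∀ x' ∈ U', ∀ (ξ' : Fin (n - 1) → ℝ) (t τ : ℝ),
        |iteratedDeriv j ω (t / jbV ξ')| * jbV ξ' ^ ((α : ℝ) - (a : ℝ)) *
            |(Dxn)^[a - j] ((Dxin)^[α] (phiOf ψ)) x' (t / jbV ξ') ξ' (τ * jbV ξ')| ≤
          C * jb t ^ ((1 : ℝ) - (a : ℝ)) * jb τ ^ ((1 : ℝ) - (α : ℝ)) := by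
  intro j a α hj hja
  -- Claim A: uniform bound on the derivative of `φ`.
  have claimA : ∃ C₀ > 0, ∀ x' ∈ Ω', ∀ xn : ℝ, |xn| ≤ 2 →
      ∀ (ξ' : Fin (n - 1) → ℝ) (ξn : ℝ),
      |(Dxn)^[a - j] ((Dxin)^[α] (phiOf ψ)) x' xn ξ' ξn| ≤
        C₀ * jbP ξ' ξn ^ ((1 : ℝ) - (α : ℝ)) := by
    by_cases hcase : a - j = 0 ∧ α = 0
    · obtain ⟨C, hCpos, hC⟩ := hS 0 0 (fun _ => 0) (fun _ => 0)
      refine ⟨2 * C, by positivity, ?_⟩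
      intro x' hx' xn hxn ξ' ξn
      obtain ⟨hb0, hα0⟩ := hcase
      rw [hb0, hα0]
      have h1 := hC x' hx' xn hxn ξ' ξn
      have h2 := hC x' hx' 0 (by norm_num) ξ' 0
      simp only [DxpM_zero, DxipM_zero, Function.iterate_zero, id_eq, Nat.cast_zero,
        CharP.cast_eq_zero, Finset.sum_const_zero, add_zero, sub_zero, Real.rpow_one]
        at h1 h2 ⊢
      have h3 : C * jbP ξ' 0 ≤ C * jbP ξ' ξn :=
        mul_le_mul_of_nonneg_left (jbP_zero_le ξ' ξn) hCpos.le
      calc |phiOf ψ x' xn ξ' ξn| = |ψ x' xn ξ' ξn - ψ x' 0 ξ' 0| := rfl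
        _ ≤ |ψ x' xn ξ' ξn| + |ψ x' 0 ξ' 0| := abs_sub _ _
        _ ≤ C * jbP ξ' ξn + C * jbP ξ' 0 := add_le_add h1 h2
        _ ≤ 2 * C * jbP ξ' ξn := by linarith
    · obtain ⟨C, hCpos, hC⟩ := hS α (a - j) (fun _ => 0) (fun _ => 0)
      refine ⟨C, hCpos, ?_⟩
      intro x' hx' xn hxn ξ' ξn
      rw [iter_phiOf ψ (a - j) α hcase]
      have h1 := hC x' hx' xn hxn ξ' ξn
      simpa [DxpM_zero, DxipM_zero] using h1
  obtain ⟨C₀, hC₀pos, hA⟩ := claimA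
  -- Bound on the iterated derivative of the cut-off on `[-1, 1]`.
  have hcont : Continuous (iteratedDeriv j ω) :=
    hω.1.continuous_iteratedDeriv j (by exact_mod_cast le_top)
  obtain ⟨M, hM⟩ := (isCompact_Icc (a := (-1:ℝ)) (b := 1)).exists_bound_of_continuousOn
    hcont.continuousOn
  have hM0 : 0 ≤ M := le_trans (norm_nonneg _) (hM 0 (by norm_num))
  refine ⟨(M + 1) * C₀ * Real.sqrt 2 ^ ((a : ℝ) - 1), by positivity, ?_⟩
  intro x' hx' ξ' t τ
  set L := jbV ξ' with hLdef
  have hL1 : 1 ≤ L := jbV_one_le ξ'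
  have hL0 : 0 < L := jbV_pos ξ'
  set s := t / L with hsdef
  have hRHS0 : 0 ≤ (M + 1) * C₀ * Real.sqrt 2 ^ ((a : ℝ) - 1) * jb t ^ ((1 : ℝ) - (a : ℝ))
      * jb τ ^ ((1 : ℝ) - (α : ℝ)) := by
    have := jb_pos t; have := jb_pos τ; positivity
  by_cases hs : |s| ≤ 1
  · -- main case
    have hts : t = s * L := by rw [hsdef, div_mul_cancel₀ t hL0.ne']
    have htL : |t| ≤ L := by
      rw [hts, abs_mul, abs_of_pos hL0]
      calc |s| * L ≤ 1 * L := mul_le_mul_of_nonneg_right hs hL0.le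
        _ = L := one_mul L
    have hjbt : jb t ≤ Real.sqrt 2 * L := by
      have ht2 : t ^ 2 ≤ L ^ 2 := by
        rw [← sq_abs t]; exact pow_le_pow_left₀ (abs_nonneg t) htL 2
      calc jb t = Real.sqrt (1 + t ^ 2) := rfl
        _ ≤ Real.sqrt (2 * L ^ 2) := Real.sqrt_le_sqrt (by nlinarith)
        _ = Real.sqrt 2 * L := by
            rw [Real.sqrt_mul (by norm_num), Real.sqrt_sq hL0.le]
    have hMs : |iteratedDeriv j ω s| ≤ M := by
      have := hM s (abs_le.mp hs |>.imp (fun h => h) (fun h => h))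
      simpa using this
    have hg := hA x' (hUΩ hx') s (le_trans hs (by norm_num)) ξ' (τ * L)
    rw [jbP_scale] at hg
    have hLrpow : (0:ℝ) ≤ L ^ ((α : ℝ) - (a : ℝ)) := Real.rpow_nonneg hL0.le _
    have hτrpow : (0:ℝ) ≤ jb τ ^ ((1 : ℝ) - (α : ℝ)) := Real.rpow_nonneg (jb_nonneg τ) _
    -- key power estimate
    have hLpow : L ^ ((1:ℝ) - (a:ℝ)) ≤ Real.sqrt 2 ^ ((a:ℝ) - 1) * jb t ^ ((1:ℝ) - (a:ℝ)) := by
      have h2L : jb t ≤ Real.sqrt 2 * L := hjbt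
      have hexp : (1:ℝ) - (a:ℝ) ≤ 0 := by
        have : (1:ℝ) ≤ (a:ℝ) := by exact_mod_cast le_trans hj hja
        linarith
      have key : (Real.sqrt 2 * L) ^ ((1:ℝ) - (a:ℝ)) ≤ jb t ^ ((1:ℝ) - (a:ℝ)) :=
        Real.rpow_le_rpow_of_nonpos (jb_pos t) h2L hexp
      have hsplit : (Real.sqrt 2 * L) ^ ((1:ℝ) - (a:ℝ))
          = Real.sqrt 2 ^ ((1:ℝ) - (a:ℝ)) * L ^ ((1:ℝ) - (a:ℝ)) :=
        Real.mul_rpow (Real.sqrt_nonneg 2) hL0.le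
      have hs2 : (0:ℝ) < Real.sqrt 2 := Real.sqrt_pos.mpr (by norm_num)
      have hcancel : Real.sqrt 2 ^ ((a:ℝ) - 1) * Real.sqrt 2 ^ ((1:ℝ) - (a:ℝ)) = 1 := by
        rw [← Real.rpow_add hs2]; norm_num
      calc L ^ ((1:ℝ) - (a:ℝ))
          = Real.sqrt 2 ^ ((a:ℝ) - 1) * ((Real.sqrt 2 * L) ^ ((1:ℝ) - (a:ℝ))) := by
            rw [hsplit, ← mul_assoc, hcancel, one_mul]
        _ ≤ Real.sqrt 2 ^ ((a:ℝ) - 1) * jb t ^ ((1:ℝ) - (a:ℝ)) := by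
            exact mul_le_mul_of_nonneg_left key (Real.rpow_nonneg hs2.le _)
    calc |iteratedDeriv j ω s| * L ^ ((α : ℝ) - (a : ℝ)) *
          |(Dxn)^[a - j] ((Dxin)^[α] (phiOf ψ)) x' s ξ' (τ * L)|
        ≤ M * L ^ ((α : ℝ) - (a : ℝ)) * (C₀ * (L * jb τ) ^ ((1 : ℝ) - (α : ℝ))) := by
          apply mul_le_mul (mul_le_mul_of_nonneg_right hMs hLrpow) hg (abs_nonneg _)
          positivity
      _ = M * C₀ * (L ^ ((α : ℝ) - (a : ℝ)) * L ^ ((1 : ℝ) - (α : ℝ)))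
            * jb τ ^ ((1 : ℝ) - (α : ℝ)) := by
          rw [Real.mul_rpow hL0.le (jb_nonneg τ)]; ring
      _ = M * C₀ * L ^ ((1 : ℝ) - (a : ℝ)) * jb τ ^ ((1 : ℝ) - (α : ℝ)) := by
          rw [← Real.rpow_add hL0]; ring_nf
      _ ≤ (M + 1) * C₀ * (Real.sqrt 2 ^ ((a:ℝ) - 1) * jb t ^ ((1:ℝ) - (a:ℝ)))
            * jb τ ^ ((1 : ℝ) - (α : ℝ)) := by
          apply mul_le_mul_of_nonneg_right _ hτrpow
          apply mul_le_mul (mul_le_mul_of_nonneg_right (by linarith) hC₀pos.le) hLpow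
            (Real.rpow_nonneg hL0.le _) (by positivity)
      _ = (M + 1) * C₀ * Real.sqrt 2 ^ ((a : ℝ) - 1) * jb t ^ ((1 : ℝ) - (a : ℝ))
            * jb τ ^ ((1 : ℝ) - (α : ℝ)) := by ring
  · -- `|s| > 1`: the cut-off derivative vanishes
    have hvanish : iteratedDeriv j ω s = 0 := by
      have hopen : IsOpen {x : ℝ | 1 < |x|} := isOpen_lt continuous_const continuous_abs
      have hmem : s ∈ {x : ℝ | 1 < |x|} := lt_of_not_ge hs
      have hev : ω =ᶠ[nhds s] fun _ => (0:ℝ) :=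
        Filter.eventually_of_mem (hopen.mem_nhds hmem)
          (fun x hx => hω.2.2.2.2 x (le_of_lt hx))
      rw [hev.iteratedDeriv_eq j, iteratedDeriv_zero_fun]
    rw [hvanish]
    simpa using hRHS0
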